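/- Let c > 1 and let φ : ℝ → ℝ be continuous, bounded, not identically zero, nonnegative, and satisfy c·φ(x) − φ(x)² = (K ∗ φ)(x) for all x, where K ∈ L¹(ℝ) is strictly positive. Then 0 < φ(x) < c for all x ∈ ℝ. If additionally φ(x) → 0 as |x| → ∞, then sup_{x∈ℝ} φ(x) < c. -/

import Mathlib

open Real MeasureTheory

/-- Any nonzero continuous bounded nonnegative solution of c·φ − φ² = K ∗ φ with
K ∈ L¹ strictly positive satisfies 0 < φ < c; if moreover φ → 0 at infinity, then
sup φ < c. -/
theorem solution_bounds (c : ℝ) (hc : 1 < c) (K φ : ℝ → ℝ)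
    (hK : MeasureTheory.Integrable K)
    (hKpos : ∀ x : ℝ, x ≠ 0 → 0 < K x)
    (hφcont : Continuous φ)
    (hφbdd : ∃ C : ℝ, ∀ x : ℝ, |φ x| ≤ C)
    (hφ0 : ∀ x : ℝ, 0 ≤ φ x)
    (hφne : φ ≠ 0)
    (heq : ∀ x : ℝ, c * φ x - (φ x) ^ 2 = ∫ y : ℝ, K (x - y) * φ y) :
    (∀ x : ℝ, 0 < φ x ∧ φ x < c) ∧
    (Filter.Tendsto φ (Filter.cocompact ℝ) (nhds 0) → ∃ M : ℝ, M < c ∧ ∀ x : ℝ, φ x ≤ M) := by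
  obtain ⟨C, hC⟩ := hφbdd
  -- a point where φ is positive
  obtain ⟨x₁, hx₁⟩ : ∃ x, φ x ≠ 0 := by
    by_contra h
    push_neg at h
    exact hφne (funext fun x => h x)
  have hx₁pos : 0 < φ x₁ := lt_of_le_of_ne (hφ0 x₁) (Ne.symm hx₁)
  -- the set where φ is positive is open and nonempty
  set U : Set ℝ := {y | 0 < φ y} with hU
  have hUopen : IsOpen U := isOpen_lt continuous_const hφcont
  have hUvol : 0 < volume U := hUopen.measure_pos volume ⟨x₁, hx₁pos⟩
  -- positivity of the convolution
  have hconv : ∀ x : ℝ, 0 < ∫ y : ℝ, K (x - y) * φ y := by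
    intro x
    have hKx : Integrable (fun y => K (x - y)) := by
      have h := (Measure.measurePreserving_sub_left (volume : Measure ℝ) x).integrable_comp
        hK.aestronglyMeasurable
      exact h.mpr hK
    have hint : Integrable (fun y => K (x - y) * φ y) := by
      have h := hKx.bdd_mul hφcont.aestronglyMeasurable
        (c := C) (Filter.Eventually.of_forall fun y => by simpa using hC y)
      simpa [mul_comm] using h
    have hae : ∀ᵐ y : ℝ, 0 ≤ K (x - y) * φ y := by
      have hne : ∀ᵐ y : ℝ, y ≠ x := by
        rw [MeasureTheory.ae_iff]
        simpa using volume_singleton (a := x)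
      filter_upwards [hne] with y hy
      exact mul_nonneg (hKpos _ (sub_ne_zero.mpr (Ne.symm hy))).le (hφ0 y)
    rw [integral_pos_iff_support_of_nonneg_ae hae hint]
    have hsub : U \ {x} ⊆ Function.support fun y => K (x - y) * φ y := by
      intro y ⟨hyU, hyx⟩
      have : y ≠ x := by simpa using hyx
      exact ne_of_gt (mul_pos (hKpos _ (sub_ne_zero.mpr (Ne.symm this))) hyU)
    calc 0 < volume U := hUvol
      _ = volume (U \ {x}) := (measure_diff_null (measure_singleton x)).symm
      _ ≤ volume (Function.support fun y => K (x - y) * φ y) := measure_mono hsub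
  -- pointwise bounds
  have hmain : ∀ x : ℝ, 0 < φ x ∧ φ x < c := by
    intro x
    have h := heq x
    have hpos : 0 < c * φ x - (φ x) ^ 2 := h ▸ hconv x
    have hφx : 0 < φ x := by
      rcases lt_or_eq_of_le (hφ0 x) with h' | h'
      · exact h'
      · exfalso; rw [← h'] at hpos; simp at hpos
    constructor
    · exact hφx
    · nlinarith
  refine ⟨hmain, fun htend => ?_⟩
  have hev : ∀ᶠ x in Filter.cocompact ℝ, φ x ≤ φ x₁ :=
    (htend.eventually (gt_mem_nhds hx₁pos)).mono fun x hx => hx.le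
  obtain ⟨x₀, hx₀⟩ := hφcont.exists_forall_ge' x₁ hev
  exact ⟨φ x₀, (hmain x₀).2, hx₀⟩
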